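/- arXiv:1511.01716 — 2 statements merged into one kernel-verified Lean document; each statement's English description precedes it below -/
import Mathlib

section
/- Let F be convex with minimizer x*, D symmetric positive definite, F_D(y) = min_x (F(x) + ½‖x−y‖²_D) the Moreau–Yosida regularization, and prox_F(y) its minimizer. If F̃ is convex with F̃ ≤ F, z minimizes x ↦ F̃(x) + ½‖x−y‖²_D, and η = F̃(z) + ½‖z−y‖²_D, then ½‖z − prox_F(y)‖²_D ≤ F_D(y) − η. -/
open Matrix

lemma stmt2_sym (n : ℕ) (D : Matrix (Fin n) (Fin n) ℝ) (hD : D.PosDef)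
    (a b : Fin n → ℝ) : a ⬝ᵥ D.mulVec b = b ⬝ᵥ D.mulVec a := by
  have hDT : Dᵀ = D := by
    have := hD.isHermitian.eq
    simpa [Matrix.conjTranspose_eq_transpose_of_trivial] using this
  rw [Matrix.dotProduct_mulVec, ← Matrix.mulVec_transpose, hDT, dotProduct_comm]

lemma stmt2_expand (n : ℕ) (D : Matrix (Fin n) (Fin n) ℝ) (hD : D.PosDef)
    (u v : Fin n → ℝ) (s t : ℝ) :
    ((s • u + t • v) ⬝ᵥ D.mulVec (s • u + t • v)) =
      s^2 * (u ⬝ᵥ D.mulVec u) + 2*(s*t)*(u ⬝ᵥ D.mulVec v) + t^2 * (v ⬝ᵥ D.mulVec v) := by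
  simp [Matrix.mulVec_add, Matrix.mulVec_smul, dotProduct_add,
    dotProduct_smul, add_dotProduct, smul_dotProduct, smul_eq_mul]
  rw [stmt2_sym n D hD v u]; ring

/-- distance estimate between the minimizer of the linearized
proximal problem and the proximal point of `F`. -/
theorem stmt_2 (n : ℕ) (D : Matrix (Fin n) (Fin n) ℝ) (hD : D.PosDef)
    (F Ft : (Fin n → ℝ) → ℝ)
    (hF : ConvexOn ℝ Set.univ F) (hFt : ConvexOn ℝ Set.univ Ft)
    (hle : ∀ x, Ft x ≤ F x) (y z p : Fin n → ℝ)
    (hz : ∀ x, Ft z + (1/2) * ((z - y) ⬝ᵥ D.mulVec (z - y))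
            ≤ Ft x + (1/2) * ((x - y) ⬝ᵥ D.mulVec (x - y)))
    (hp : ∀ x, F p + (1/2) * ((p - y) ⬝ᵥ D.mulVec (p - y))
            ≤ F x + (1/2) * ((x - y) ⬝ᵥ D.mulVec (x - y)))
    (η : ℝ) (hη : η = Ft z + (1/2) * ((z - y) ⬝ᵥ D.mulVec (z - y))) :
    (1/2) * ((z - p) ⬝ᵥ D.mulVec (z - p))
      ≤ (F p + (1/2) * ((p - y) ⬝ᵥ D.mulVec (p - y))) - η := by
  set d : ℝ := (z - p) ⬝ᵥ D.mulVec (z - p) with hd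
  have hd0 : 0 ≤ d := by
    have := hD.posSemidef.dotProduct_mulVec_nonneg (z - p)
    simpa [hd] using this
  -- strong convexity of x ↦ Ft x + ½‖x-y‖²_D at its minimizer z, along direction p
  have key : ∀ t : ℝ, 0 < t → t ≤ 1 →
      η + (1 - t)/2 * d ≤ Ft p + (1/2) * ((p - y) ⬝ᵥ D.mulVec (p - y)) := by
    intro t ht0 ht1
    set w : Fin n → ℝ := (1 - t) • z + t • p with hw
    -- convexity of Ft
    have hconv : Ft w ≤ (1 - t) * Ft z + t * Ft p := by
      have := hFt.2 (Set.mem_univ z) (Set.mem_univ p)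
        (show (0:ℝ) ≤ 1 - t by linarith) (show (0:ℝ) ≤ t by linarith)
        (show (1 - t) + t = 1 by ring)
      simpa [hw, smul_eq_mul] using this
    -- quadratic identity
    have hquad : (w - y) ⬝ᵥ D.mulVec (w - y)
        = (1 - t) * ((z - y) ⬝ᵥ D.mulVec (z - y))
          + t * ((p - y) ⬝ᵥ D.mulVec (p - y)) - t * (1 - t) * d := by
      have hwy : w - y = (1 - t) • (z - y) + t • (p - y) := by
        funext i
        simp only [hw, Pi.sub_apply, Pi.add_apply, Pi.smul_apply, smul_eq_mul]
        ring
      have hzp : z - p = (1 : ℝ) • (z - y) + (-1 : ℝ) • (p - y) := by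
        funext i
        simp only [Pi.sub_apply, Pi.add_apply, Pi.smul_apply, smul_eq_mul]
        ring
      have h1 := stmt2_expand n D hD (z - y) (p - y) (1 - t) t
      have h2 := stmt2_expand n D hD (z - y) (p - y) 1 (-1)
      rw [hwy, h1, hd, hzp, h2]
      ring
    have := hz w
    rw [hη]
    nlinarith [this, hconv, hquad, hz w]
  -- take t → 0⁺
  have main : η + d/2 ≤ F p + (1/2) * ((p - y) ⬝ᵥ D.mulVec (p - y)) := by
    by_contra hcon
    push_neg at hcon
    set Gp : ℝ := F p + (1/2) * ((p - y) ⬝ᵥ D.mulVec (p - y)) with hGp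
    set ε : ℝ := η + d/2 - Gp with hε
    have hε0 : 0 < ε := by simp [hε]; linarith
    set t : ℝ := min 1 (2 * ε / (d + 1)) with htdef
    have ht0 : 0 < t := by
      apply lt_min one_pos
      positivity
    have ht1 : t ≤ 1 := min_le_left _ _
    have ht2 : t ≤ 2 * ε / (d + 1) := min_le_right _ _
    have hkey := key t ht0 ht1
    have hFtp : Ft p + (1/2) * ((p - y) ⬝ᵥ D.mulVec (p - y)) ≤ Gp := by
      have := hle p; simp [hGp]; linarith
    have htd : t * d / 2 < ε := by
      have h1 : t * d ≤ (2 * ε / (d + 1)) * d :=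
        mul_le_mul_of_nonneg_right ht2 hd0
      have h2 : (2 * ε / (d + 1)) * d < 2 * ε := by
        rw [div_mul_eq_mul_div, div_lt_iff₀ (by linarith)]
        nlinarith
      linarith
    -- hkey : η + (1 - t)/2 * d ≤ Ft p + ...  ≤ Gp = η + d/2 - ε
    nlinarith [hkey, hFtp]
  linarith
end

section
/- Let d > 0, s ∈ ℝᵐ, y ∈ ℝᵐ, and D a positive definite diagonal m×m matrix. Consider h(x) = d‖x‖₂ + ⟨s, x⟩ + ½‖x − y‖²_D. If Σ_i (D_ii y_i − s_i)² ≤ d², then x = 0 minimizes h. -/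
open Matrix

/-- vanishing condition for the group-lasso proximal subproblem:
if `Σᵢ (Dᵢᵢ yᵢ − sᵢ)² ≤ d²` then `x = 0` minimizes
`h(x) = d‖x‖₂ + ⟨s,x⟩ + ½‖x − y‖²_D`. -/
theorem stmt_17 (m : ℕ) (d : ℝ) (hd : 0 < d) (s y : Fin m → ℝ)
    (Dd : Fin m → ℝ) (hDd : ∀ i, 0 < Dd i)
    (hcond : (∑ i, (Dd i * y i - s i) ^ 2) ≤ d ^ 2) :
    ∀ x : Fin m → ℝ,
      d * Real.sqrt (∑ i : Fin m, ((0 : Fin m → ℝ) i) ^ 2)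
        + s ⬝ᵥ (0 : Fin m → ℝ)
        + (1/2) * ∑ i : Fin m, Dd i * ((0 : Fin m → ℝ) i - y i) ^ 2
      ≤ d * Real.sqrt (∑ i, (x i) ^ 2) + s ⬝ᵥ x
        + (1/2) * ∑ i, Dd i * (x i - y i) ^ 2 := by
  intro x
  have hx2 : (0:ℝ) ≤ ∑ i, (x i) ^ 2 := Finset.sum_nonneg fun i _ => sq_nonneg _
  have hsq : Real.sqrt (∑ i : Fin m, ((0 : Fin m → ℝ) i) ^ 2) = 0 := by simp
  have hdot0 : s ⬝ᵥ (0 : Fin m → ℝ) = 0 := by simp [dotProduct]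
  -- Cauchy–Schwarz
  have hCS : ∑ i, x i * (Dd i * y i - s i) ≤ Real.sqrt (∑ i, (x i) ^ 2) * d := by
    have h1 : (∑ i, x i * (Dd i * y i - s i)) ^ 2 ≤
        (∑ i, (x i) ^ 2) * (∑ i, (Dd i * y i - s i) ^ 2) :=
      Finset.sum_mul_sq_le_sq_mul_sq Finset.univ x (fun i => Dd i * y i - s i)
    have h2 : (∑ i, x i * (Dd i * y i - s i)) ^ 2 ≤ (∑ i, (x i) ^ 2) * d ^ 2 :=
      h1.trans (mul_le_mul_of_nonneg_left hcond hx2)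
    calc ∑ i, x i * (Dd i * y i - s i)
        ≤ |∑ i, x i * (Dd i * y i - s i)| := le_abs_self _
      _ = Real.sqrt ((∑ i, x i * (Dd i * y i - s i)) ^ 2) := (Real.sqrt_sq_eq_abs _).symm
      _ ≤ Real.sqrt ((∑ i, (x i) ^ 2) * d ^ 2) := Real.sqrt_le_sqrt h2
      _ = Real.sqrt (∑ i, (x i) ^ 2) * d := by
          rw [Real.sqrt_mul hx2, Real.sqrt_sq hd.le]
  have hid : ∑ i, Dd i * (x i - y i) ^ 2 =
      ∑ i, Dd i * (x i) ^ 2 - 2 * ∑ i, x i * (Dd i * y i - s i)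
        - 2 * ∑ i, s i * x i + ∑ i, Dd i * (y i) ^ 2 := by
    rw [Finset.mul_sum, Finset.mul_sum, ← Finset.sum_sub_distrib, ← Finset.sum_sub_distrib,
      ← Finset.sum_add_distrib]
    exact Finset.sum_congr rfl fun i _ => by ring
  have hDx : (0:ℝ) ≤ ∑ i, Dd i * (x i) ^ 2 :=
    Finset.sum_nonneg fun i _ => mul_nonneg (hDd i).le (sq_nonneg _)
  have hdots : s ⬝ᵥ x = ∑ i, s i * x i := rfl
  have h0 : ∑ i : Fin m, Dd i * ((0 : Fin m → ℝ) i - y i) ^ 2 = ∑ i, Dd i * (y i) ^ 2 :=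
    Finset.sum_congr rfl fun i _ => by simp
  rw [hsq, hdot0, hdots, hid, h0]
  nlinarith [hCS]
end
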